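/- Let T = (V, A) be a polytree and I⁰, Iᵗ independent sets with |I⁰| = |Iᵗ| such that I⁰ is reconfigurable into Iᵗ. Suppose v ∈ I⁰ ∩ Iᵗ satisfies w(e; I⁰, Iᵗ) = 0 for all arcs e incident to v (v carries a rigid token). If there exists a neighbor u of v and an arc e incident to u with w(e; I⁰, Iᵗ) > 0, then a contradiction arises; that is, in this situation (T, I⁰, Iᵗ) is a no-instance of directed token sliding. -/

import Mathlib

open scoped Classical

variable {V : Type*}

/-- The underlying undirected simple graph of a digraph given by its arc relation. -/
def underlying (A : V → V → Prop) : SimpleGraph V := SimpleGraph.fromRel A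

/-- A polytree: a loopless digraph without antiparallel arcs whose underlying graph is a tree. -/
def IsPolytree (A : V → V → Prop) : Prop :=
  (∀ v, ¬ A v v) ∧ (∀ u v, A u v → ¬ A v u) ∧ (underlying A).IsTree

/-- `x` lies in the weakly connected component of `T - (a,b)` containing the tail `a`. -/
def InCminus (A : V → V → Prop) (a b x : V) : Prop :=
  ((underlying A).deleteEdges {s(a, b)}).Reachable a x

/-- `w((a,b); X, Y) = |C⁻ ∩ X| - |C⁻ ∩ Y|`. -/
noncomputable def wArc [Fintype V] [DecidableEq V] (A : V → V → Prop)
    (X Y : Finset V) (a b : V) : ℤ :=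
  ((X.filter fun x => InCminus A a b x).card : ℤ) -
    ((Y.filter fun x => InCminus A a b x).card : ℤ)

/-- Independence in the underlying undirected graph. -/
def IndepF (A : V → V → Prop) (I : Finset V) : Prop :=
  ∀ u ∈ I, ∀ v ∈ I, ¬ (underlying A).Adj u v

/-- One token-sliding step along an arc, in its direction. -/
def IsStep [DecidableEq V] (A : V → V → Prop) (I J : Finset V) : Prop :=
  ∃ u v, A u v ∧ I \ J = {u} ∧ J \ I = {v}

/-- A reconfiguration sequence of independent sets under directed token sliding. -/
def IsReconfSeq [DecidableEq V] (A : V → V → Prop) {ℓ : ℕ}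
    (f : Fin (ℓ + 1) → Finset V) : Prop :=
  (∀ i, IndepF A (f i)) ∧ ∀ i : Fin ℓ, IsStep A (f i.castSucc) (f i.succ)

/-- `I` is reconfigurable into `J` under directed token sliding. -/
def Reconfigurable [DecidableEq V] (A : V → V → Prop) (I J : Finset V) : Prop :=
  ∃ (ℓ : ℕ) (f : Fin (ℓ + 1) → Finset V),
    IsReconfSeq A f ∧ f 0 = I ∧ f (Fin.last ℓ) = J

/-- A directed path in the digraph `A`, given by its (distinct) vertices in order. -/
structure DirPath (A : V → V → Prop) where
  len : ℕ
  vtx : Fin (len + 1) → V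
  inj : Function.Injective vtx
  arc : ∀ i : Fin len, A (vtx i.castSucc) (vtx i.succ)

namespace DirPath
variable {A : V → V → Prop}
/-- The source of a directed path. -/
def src (p : DirPath A) : V := p.vtx 0
/-- The sink of a directed path. -/
def snk (p : DirPath A) : V := p.vtx (Fin.last p.len)
/-- The second vertex `s'(P)` of a directed path. -/
def sndVtx (p : DirPath A) : V := p.vtx ⟨min 1 p.len, by omega⟩
/-- The second-to-last vertex `t'(P)` of a directed path. -/
def penVtx (p : DirPath A) : V := p.vtx ⟨p.len - 1, by omega⟩
/-- `v` is a vertex of the path `p`. -/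
def mem (p : DirPath A) (v : V) : Prop := ∃ i, p.vtx i = v
/-- `x` is an internal vertex of `p` (neither source nor sink). -/
def internal (p : DirPath A) (x : V) : Prop :=
  ∃ i : Fin (p.len + 1), p.vtx i = x ∧ i ≠ 0 ∧ i ≠ Fin.last p.len
end DirPath

/-- A directed path matching from `X` to `Y`: distinct sources forming `X`,
distinct sinks forming `Y`. -/
def IsDPM [DecidableEq V] {A : V → V → Prop} {k : ℕ}
    (X Y : Finset V) (P : Fin k → DirPath A) : Prop :=
  (Function.Injective fun i => (P i).src) ∧ (Function.Injective fun i => (P i).snk) ∧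
  (Finset.univ.image fun i => (P i).src) = X ∧ (Finset.univ.image fun i => (P i).snk) = Y

/-- The path-set conditions (P1)–(P4). -/
def PathSetConds [DecidableEq V] {A : V → V → Prop} {k : ℕ}
    (X Y : Finset V) (P : Fin k → DirPath A) : Prop :=
  (∀ i, 2 ≤ (P i).len) ∧ IsDPM X Y P ∧
  (∀ i j, i ≠ j → (P i).sndVtx ≠ (P j).sndVtx) ∧
  (∀ i j, i ≠ j → (P i).penVtx ≠ (P j).penVtx)

/-- Length of the (unique, when it exists) directed path from `u` to `v`. -/
noncomputable def ddist (A : V → V → Prop) (u v : V) : ℕ :=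
  sInf {n | ∃ p : DirPath A, p.src = u ∧ p.snk = v ∧ p.len = n}

/-- A biased path pair: a common internal vertex `x` with
`dist(s(p),x) > dist(s(q),x)` and `dist(x,t(p)) > dist(x,t(q))`. -/
def BiasedPair (A : V → V → Prop) (p q : DirPath A) : Prop :=
  ∃ x, p.internal x ∧ q.internal x ∧
    ddist A q.src x < ddist A p.src x ∧ ddist A x q.snk < ddist A x p.snk

/-- A rigid token: `v ∈ X ∩ Y` and all incident arcs have `w`-value `0`. -/
def RigidTok [Fintype V] [DecidableEq V] (A : V → V → Prop) (X Y : Finset V) (v : V) : Prop :=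
  v ∈ X ∧ v ∈ Y ∧ ∀ a b, A a b → (a = v ∨ b = v) → wArc A X Y a b = 0

/-- A blocking arc: `w((u,v)) = 1` and every other arc incident to `u` or `v`
has `w`-value `0`. -/
def BlockingArc [Fintype V] [DecidableEq V] (A : V → V → Prop) (X Y : Finset V)
    (u v : V) : Prop :=
  A u v ∧ wArc A X Y u v = 1 ∧
    ∀ a b, A a b → (a, b) ≠ (u, v) → (a = u ∨ b = u ∨ a = v ∨ b = v) →
      wArc A X Y a b = 0

/-- A trajectory of a single token along a reconfiguration sequence. -/
def IsTrajectory [DecidableEq V] (A : V → V → Prop) {ℓ : ℕ}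
    (f : Fin (ℓ + 1) → Finset V) (g : Fin (ℓ + 1) → V) : Prop :=
  (∀ i, g i ∈ f i) ∧ ∀ i : Fin ℓ,
    g i.succ = g i.castSucc ∨
      (f i.castSucc \ f i.succ = {g i.castSucc} ∧ f i.succ \ f i.castSucc = {g i.succ})

/-- Number of steps of a reconfiguration sequence sliding a token from `u` to `v`. -/
noncomputable def movesAlong [DecidableEq V] {ℓ : ℕ} (f : Fin (ℓ + 1) → Finset V)
    (u v : V) : ℕ :=
  (Finset.univ.filter fun i : Fin ℓ =>
    f i.castSucc \ f i.succ = {u} ∧ f i.succ \ f i.castSucc = {v}).card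

/-- Number of forward arc traversals of a walk with vertex list `l`. -/
noncomputable def fwdCount (A : V → V → Prop) (l : List V) : ℕ :=
  (l.zip l.tail).countP fun p => decide (A p.1 p.2)

/-- Number of reverse arc traversals of a walk with vertex list `l`. -/
noncomputable def revCount (A : V → V → Prop) (l : List V) : ℕ :=
  (l.zip l.tail).countP fun p => decide (A p.2 p.1)

/-- Number of traversals of the ordered pair `(a, b)` by a walk with vertex list `l`. -/
def traverseCount [DecidableEq V] (l : List V) (a b : V) : ℕ :=
  (l.zip l.tail).count (a, b)

/-- A vertex `v` touches a directed path `p` if `N[v]` meets the vertex set of `p`. -/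
def Touches (A : V → V → Prop) (v : V) (p : DirPath A) : Prop :=
  ∃ u, p.mem u ∧ (u = v ∨ (underlying A).Adj v u)

/-- Independence in an undirected graph (for undirected token sliding). -/
def UIndep (G : SimpleGraph V) (I : Finset V) : Prop :=
  ∀ u ∈ I, ∀ v ∈ I, ¬ G.Adj u v

/-- One undirected token-sliding step along an edge. -/
def UIsStep [DecidableEq V] (G : SimpleGraph V) (I J : Finset V) : Prop :=
  ∃ u v, G.Adj u v ∧ I \ J = {u} ∧ J \ I = {v}

/-- Reconfigurability under (undirected) token sliding. -/
def UReconfigurable [DecidableEq V] (G : SimpleGraph V) (I J : Finset V) : Prop :=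
  ∃ (ℓ : ℕ) (f : Fin (ℓ + 1) → Finset V),
    (∀ i, UIndep G (f i)) ∧ (∀ i : Fin ℓ, UIsStep G (f i.castSucc) (f i.succ)) ∧
    f 0 = I ∧ f (Fin.last ℓ) = J

section Aux

variable [Fintype V] [DecidableEq V]

/-- Count of tokens on the tail-side component of an arc. -/
noncomputable def cntC (A : V → V → Prop) (a b : V) (I : Finset V) : ℕ :=
  (I.filter fun x => InCminus A a b x).card

lemma wArc_eq_cnt (A : V → V → Prop) (X Y : Finset V) (a b : V) :
    wArc A X Y a b = (cntC A a b X : ℤ) - (cntC A a b Y : ℤ) := rfl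

lemma inCminus_self (A : V → V → Prop) (a b : V) : InCminus A a b a :=
  SimpleGraph.Reachable.refl a

lemma not_inCminus_head (A : V → V → Prop) (hT : IsPolytree A) {a b : V} (hab : A a b) :
    ¬ InCminus A a b b := by
  have hne : a ≠ b := by rintro rfl; exact hT.1 a hab
  have hadj : (underlying A).Adj a b := by
    simp [underlying, SimpleGraph.fromRel_adj, hne, hab]
  have hbr := (SimpleGraph.isAcyclic_iff_forall_adj_isBridge.mp hT.2.2.IsAcyclic) hadj
  exact SimpleGraph.isBridge_iff.mp hbr

lemma cross_edge (A : V → V → Prop) {a b x y : V}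
    (hadj : (underlying A).Adj x y) (hx : InCminus A a b x) (hy : ¬ InCminus A a b y) :
    s(x, y) = s(a, b) := by
  by_contra hne
  apply hy
  exact hx.trans (SimpleGraph.Adj.reachable (by
    simp only [SimpleGraph.deleteEdges_adj, Set.mem_singleton_iff]
    exact ⟨hadj, hne⟩))

lemma step_sets {I J : Finset V} {x y : V} (h1 : I \ J = {x}) (h2 : J \ I = {y}) :
    x ∈ I ∧ x ∉ J ∧ y ∈ J ∧ y ∉ I ∧ J = insert y (I.erase x) := by
  have hx : x ∈ I \ J := by rw [h1]; exact Finset.mem_singleton_self x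
  have hy : y ∈ J \ I := by rw [h2]; exact Finset.mem_singleton_self y
  rw [Finset.mem_sdiff] at hx hy
  refine ⟨hx.1, hx.2, hy.1, hy.2, ?_⟩
  ext z
  simp only [Finset.mem_insert, Finset.mem_erase]
  constructor
  · intro hz
    by_cases hzI : z ∈ I
    · right
      refine ⟨?_, hzI⟩
      rintro rfl; exact hx.2 hz
    · left
      have : z ∈ J \ I := Finset.mem_sdiff.mpr ⟨hz, hzI⟩
      rw [h2] at this; exact Finset.mem_singleton.mp this
  · rintro (rfl | ⟨hzx, hzI⟩)
    · exact hy.1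
    · by_contra hzJ
      have : z ∈ I \ J := Finset.mem_sdiff.mpr ⟨hzI, hzJ⟩
      rw [h1] at this
      exact hzx (Finset.mem_singleton.mp this)

lemma filter_card_step {I : Finset V} {x y : V} (hx : x ∈ I) (hy : y ∉ I) (P : V → Prop) :
    (((insert y (I.erase x)).filter P).card + (if P x then 1 else 0)
      = ((I.filter P).card + (if P y then 1 else 0))) := by
  rw [Finset.filter_insert, Finset.filter_erase]
  have hyf : y ∉ (I.filter P).erase x := fun h =>
    hy (Finset.mem_of_mem_filter y (Finset.mem_of_mem_erase h))
  by_cases hPy : P y <;> by_cases hPx : P x <;>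
    simp only [hPy, hPx, if_true, if_false]
  · rw [Finset.card_insert_of_notMem hyf,
      Finset.card_erase_of_mem (Finset.mem_filter.mpr ⟨hx, hPx⟩)]
    have : 0 < (I.filter P).card :=
      Finset.card_pos.mpr ⟨x, Finset.mem_filter.mpr ⟨hx, hPx⟩⟩
    omega
  · rw [Finset.card_insert_of_notMem hyf,
      Finset.erase_eq_of_notMem (fun h => hPx (Finset.mem_filter.mp h).2)]
  · rw [Finset.card_erase_of_mem (Finset.mem_filter.mpr ⟨hx, hPx⟩)]
    have : 0 < (I.filter P).card :=
      Finset.card_pos.mpr ⟨x, Finset.mem_filter.mpr ⟨hx, hPx⟩⟩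
    omega
  · rw [Finset.erase_eq_of_notMem (fun h => hPx (Finset.mem_filter.mp h).2)]

lemma cnt_step_eq (A : V → V → Prop) (a b : V) {I J : Finset V} {x y : V}
    (h1 : I \ J = {x}) (h2 : J \ I = {y}) :
    cntC A a b J + (if InCminus A a b x then 1 else 0)
      = cntC A a b I + (if InCminus A a b y then 1 else 0) := by
  obtain ⟨hxI, _, _, hyI, hJ⟩ := step_sets h1 h2
  unfold cntC
  rw [hJ]
  exact filter_card_step hxI hyI _

lemma cnt_step_cases (A : V → V → Prop) (hT : IsPolytree A) {a b : V} (hab : A a b)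
    {I J : Finset V} {x y : V} (hxy : A x y) (h1 : I \ J = {x}) (h2 : J \ I = {y}) :
    (cntC A a b J = cntC A a b I ∧ (x, y) ≠ (a, b)) ∨
      ((x, y) = (a, b) ∧ cntC A a b J + 1 = cntC A a b I) := by
  have hkey := cnt_step_eq A a b h1 h2
  have hnxy : x ≠ y := by rintro rfl; exact hT.1 x hxy
  have hadj : (underlying A).Adj x y := by
    simp [underlying, SimpleGraph.fromRel_adj, hnxy, hxy]
  have hPa : InCminus A a b a := inCminus_self A a b
  have hPb : ¬ InCminus A a b b := not_inCminus_head A hT hab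
  by_cases hPx : InCminus A a b x <;> by_cases hPy : InCminus A a b y
  · left
    refine ⟨by simpa [hPx, hPy] using hkey, ?_⟩
    rintro h
    rw [Prod.mk.injEq] at h
    exact hPb (h.2 ▸ hPy)
  · -- crossing outward: must be the arc (a,b)
    have hedge := cross_edge A hadj hPx hPy
    rw [Sym2.eq_iff] at hedge
    rcases hedge with ⟨rfl, rfl⟩ | ⟨rfl, rfl⟩
    · right
      exact ⟨rfl, by simpa [hPx, hPy] using hkey⟩
    · exact absurd hPx hPb
  · -- crossing inward: impossible
    have hedge := cross_edge A hadj.symm hPy hPx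
    rw [Sym2.eq_iff] at hedge
    rcases hedge with ⟨hy_eq, hx_eq⟩ | ⟨hy_eq, hx_eq⟩
    · rw [hy_eq, hx_eq] at hxy
      exact absurd hxy (hT.2.1 _ _ hab)
    · rw [hy_eq] at hPy
      exact absurd hPy hPb
  · left
    refine ⟨by simpa [hPx, hPy] using hkey, ?_⟩
    rintro h
    rw [Prod.mk.injEq] at h
    exact hPx (h.1 ▸ hPa)

end Aux

/-- If `v` carries a rigid token and some neighbor `u` of `v` has an
incident arc of positive `w`-value, then the instance is a no-instance. -/
theorem stmt_6 [Fintype V] [DecidableEq V] (A : V → V → Prop) (hT : IsPolytree A)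
    (I0 It : Finset V) (h0 : IndepF A I0) (ht : IndepF A It) (hcard : I0.card = It.card)
    (v : V) (hv0 : v ∈ I0) (hvt : v ∈ It)
    (hrigid : ∀ a b, A a b → (a = v ∨ b = v) → wArc A I0 It a b = 0)
    (u : V) (hu : (underlying A).Adj v u)
    (a b : V) (hab : A a b) (hinc : a = u ∨ b = u) (hpos : 0 < wArc A I0 It a b) :
    ¬ Reconfigurable A I0 It := by
  rintro ⟨ℓ, f, ⟨hind, hstep⟩, hf0, hfl⟩
  set F : ℕ → Finset V := fun n => f ⟨min n ℓ, by omega⟩ with hFdef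
  have hF0 : F 0 = I0 := by
    have h : (⟨min 0 ℓ, by omega⟩ : Fin (ℓ+1)) = 0 := by ext; simp
    simpa [hFdef, h] using hf0
  have hFtop : ∀ n, ℓ ≤ n → F n = It := by
    intro n hn
    have h : (⟨min n ℓ, by omega⟩ : Fin (ℓ+1)) = Fin.last ℓ := by
      ext; simp [Fin.last]; omega
    simpa [hFdef, h] using hfl
  have hFstep : ∀ n, n < ℓ → IsStep A (F n) (F (n+1)) := by
    intro n hn
    have h := hstep ⟨n, hn⟩
    have e1 : (⟨n, hn⟩ : Fin ℓ).castSucc = (⟨min n ℓ, by omega⟩ : Fin (ℓ+1)) := by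
      ext; simp; omega
    have e2 : (⟨n, hn⟩ : Fin ℓ).succ = (⟨min (n+1) ℓ, by omega⟩ : Fin (ℓ+1)) := by
      ext; simp; omega
    rw [e1, e2] at h
    exact h
  have hFind : ∀ n, IndepF A (F n) := fun n => hind _
  -- Part A: the rigid token never moves
  have hA : ∀ n, v ∈ F n := by
    by_contra hcon
    push_neg at hcon
    have hex : ∃ n, v ∉ F n := hcon
    let m := Nat.find hex
    have hm : v ∉ F m := Nat.find_spec hex
    have hm0 : m ≠ 0 := by intro h; rw [h, hF0] at hm; exact hm hv0
    have hmℓ : m ≤ ℓ := by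
      by_contra h
      exact hm (by rw [hFtop m (by omega)]; exact hvt)
    have hprev : v ∈ F (m-1) := by
      by_contra h
      exact Nat.find_min hex (show m - 1 < m by omega) h
    obtain ⟨x, z, hxz, h1, h2⟩ := hFstep (m-1) (by omega)
    have hm1 : m - 1 + 1 = m := by omega
    rw [hm1] at h1 h2
    have hxv : x = v := by
      have hmem : v ∈ F (m-1) \ F m := Finset.mem_sdiff.mpr ⟨hprev, hm⟩
      rw [h1] at hmem
      exact (Finset.mem_singleton.mp hmem).symm
    rw [hxv] at hxz h1
    have hPz : ¬ InCminus A v z z := not_inCminus_head A hT hxz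
    have hPv : InCminus A v z v := inCminus_self A v z
    have hkey := cnt_step_eq A v z h1 h2
    rw [if_pos hPv, if_neg hPz] at hkey
    have hmono : ∀ n, cntC A v z (F (n+1)) ≤ cntC A v z (F n) := by
      intro n
      by_cases hn : n < ℓ
      · obtain ⟨x', y', hxy', h1', h2'⟩ := hFstep n hn
        rcases cnt_step_cases A hT hxz hxy' h1' h2' with ⟨he, _⟩ | ⟨_, he⟩ <;> omega
      · rw [hFtop n (by omega), hFtop (n+1) (by omega)]
    have hanti : Antitone (fun n => cntC A v z (F n)) := antitone_nat_of_succ_le hmono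
    have hle1 : cntC A v z (F ℓ) ≤ cntC A v z (F m) := hanti hmℓ
    have hle2 : cntC A v z (F (m-1)) ≤ cntC A v z (F 0) :=
      hanti (Nat.zero_le _)
    have hlt : cntC A v z It < cntC A v z I0 := by
      rw [← hF0, ← hFtop ℓ le_rfl]; omega
    have hzero := hrigid v z hxz (Or.inl rfl)
    rw [wArc_eq_cnt] at hzero
    omega
  -- Part B: some step slides a token along the arc (a, b)
  have hB : ∃ n, n < ℓ ∧ F n \ F (n+1) = {a} ∧ F (n+1) \ F n = {b} := by
    by_contra hcon
    push_neg at hcon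
    have hconst : ∀ n, cntC A a b (F n) = cntC A a b (F 0) := by
      intro n
      induction n with
      | zero => rfl
      | succ k ih =>
        by_cases hk : k < ℓ
        · obtain ⟨x', y', hxy', h1', h2'⟩ := hFstep k hk
          rcases cnt_step_cases A hT hab hxy' h1' h2' with ⟨he, _⟩ | ⟨hpair, _⟩
          · rw [he, ih]
          · exfalso
            rw [Prod.mk.injEq] at hpair
            exact hcon k hk (hpair.1 ▸ h1') (hpair.2 ▸ h2')
        · rw [hFtop (k+1) (by omega), ← hFtop k (by omega)]
          exact ih
    have heq : cntC A a b It = cntC A a b I0 := by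
      rw [← hF0, ← hFtop ℓ le_rfl]
      exact hconst ℓ
    rw [wArc_eq_cnt] at hpos
    omega
  obtain ⟨n, hn, ha1, hb1⟩ := hB
  have haF : a ∈ F n := by
    have h : a ∈ F n \ F (n+1) := ha1 ▸ Finset.mem_singleton_self a
    exact (Finset.mem_sdiff.mp h).1
  have hbF : b ∈ F (n+1) := by
    have h : b ∈ F (n+1) \ F n := hb1 ▸ Finset.mem_singleton_self b
    exact (Finset.mem_sdiff.mp h).1
  rcases hinc with rfl | rfl
  · exact hFind n v (hA n) a haF hu
  · exact hFind (n+1) v (hA (n+1)) b hbF hu
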